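/- Under the assumptions of the energy identity for the chemotaxis tumor-growth system, the energy E is a strict Lyapunov function: if a solution satisfies E(φ(t),σ(t)) = E(φ₀,σ₀) for all t ≥ 0, then ∇μ(t) = 0, ∇N_σ(t) = 0, and p(φ)(N_σ(t) − μ(t)) = 0 almost everywhere in Ω for all t, and consequently φ_t ≡ 0 and σ_t ≡ 0, i.e., (φ₀,σ₀) is a stationary point. -/

import Mathlib

open MeasureTheory Filter Metric

noncomputable section

/-- The Laplacian of a scalar field on `ℝ³`. -/
def lap14 (f : EuclideanSpace ℝ (Fin 3) → ℝ) (x : EuclideanSpace ℝ (Fin 3)) : ℝ :=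
  ∑ i : Fin 3, iteratedFDeriv ℝ 2 f x ![EuclideanSpace.single i 1, EuclideanSpace.single i 1]

/-- The Cahn–Hilliard tumor-growth energy with chemotaxis, at time `s`. -/
def En14 (Ω : Set (EuclideanSpace ℝ (Fin 3))) (χφ χσ : ℝ) (Ψ : ℝ → ℝ)
    (φ σ : ℝ → EuclideanSpace ℝ (Fin 3) → ℝ) (s : ℝ) : ℝ :=
  (1 / 2) * (∫ x in Ω, ‖gradient (φ s) x‖ ^ 2) + (∫ x in Ω, Ψ (φ s x))
    + (χσ / 2) * (∫ x in Ω, (σ s x) ^ 2) + χφ * (∫ x in Ω, σ s x * (1 - φ s x))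


-- If a function vanishes a.e. on an open set, its fderiv vanishes everywhere on that set.
lemma fderiv_eq_zero_of_ae_zero_on {F' : Type*} [NormedAddCommGroup F'] [NormedSpace ℝ F']
    (g : EuclideanSpace ℝ (Fin 3) → F') (U : Set (EuclideanSpace ℝ (Fin 3)))
    (hU : IsOpen U) (h0 : volume ({y | ¬ g y = 0} ∩ U) = 0) :
    ∀ x ∈ U, fderiv ℝ g x = 0 := by
  intro x hx
  classical
  set S : Set (EuclideanSpace ℝ (Fin 3)) := {y | g y = 0} ∩ U with hSdef
  have key : ∀ z ρ, 0 < ρ → Metric.ball z ρ ⊆ U → (S ∩ Metric.ball z ρ).Nonempty := by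
    intro z ρ hρ hsub
    by_contra hempty
    rw [Set.not_nonempty_iff_eq_empty] at hempty
    have hball : Metric.ball z ρ ⊆ {y | ¬ g y = 0} ∩ U := by
      intro w hw
      refine ⟨fun hgw => ?_, hsub hw⟩
      exact Set.eq_empty_iff_forall_notMem.mp hempty w ⟨⟨hgw, hsub hw⟩, hw⟩
    have hle := measure_mono (μ := volume) hball
    rw [h0] at hle
    exact absurd (le_antisymm hle zero_le) (ne_of_gt (measure_ball_pos volume z hρ))
  obtain ⟨r, hr, hrU⟩ := Metric.isOpen_iff.mp hU x hx
  have hxc : x ∈ closure S := by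
    rw [Metric.mem_closure_iff]
    intro ε hε
    obtain ⟨y, hyS, hyb⟩ := key x (min ε r) (lt_min hε hr)
      ((Metric.ball_subset_ball (min_le_right _ _)).trans hrU)
    refine ⟨y, hyS, ?_⟩
    rw [dist_comm]
    exact lt_of_lt_of_le hyb (min_le_left _ _)
  have htc : ∀ v, v ∈ tangentConeAt ℝ S x := by
    intro v
    set ρ : ℕ → ℝ := fun n => min (((n : ℝ) + 1)⁻¹ ^ 2) (r / 2) with hρdef
    set z : ℕ → EuclideanSpace ℝ (Fin 3) := fun n => x + ((n : ℝ) + 1)⁻¹ • v with hzdef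
    have hρpos : ∀ n, 0 < ρ n := fun n => lt_min (by positivity) (by positivity)
    have hinv : Tendsto (fun n : ℕ => ((n : ℝ) + 1)⁻¹) atTop (nhds 0) := by
      simpa [one_div] using tendsto_one_div_add_atTop_nhds_zero_nat (𝕜 := ℝ)
    have hto : Tendsto (fun n : ℕ => ((n : ℝ) + 1)⁻¹ * ‖v‖) atTop (nhds 0) := by
      simpa using hinv.mul_const ‖v‖
    have hev : ∀ᶠ n : ℕ in atTop, Metric.ball (z n) (ρ n) ⊆ U := by
      filter_upwards [hto.eventually (gt_mem_nhds (by positivity : (0:ℝ) < r / 2))] with n hn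
      intro w hw
      apply hrU
      have hz : dist (z n) x = ((n : ℝ) + 1)⁻¹ * ‖v‖ := by
        rw [hzdef]
        simp only [dist_eq_norm, add_sub_cancel_left]
        rw [norm_smul, Real.norm_of_nonneg (by positivity : (0:ℝ) ≤ ((n : ℝ) + 1)⁻¹)]
      have h1 : dist w x ≤ dist w (z n) + dist (z n) x := dist_triangle _ _ _
      have h2 : dist w (z n) < ρ n := hw
      have h3 : ρ n ≤ r / 2 := min_le_right _ _
      simp only [Metric.mem_ball]
      calc dist w x ≤ dist w (z n) + dist (z n) x := h1
        _ < ρ n + ((n : ℝ) + 1)⁻¹ * ‖v‖ := by rw [hz]; exact add_lt_add_of_lt_of_le h2 le_rfl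
        _ < r / 2 + r / 2 := add_lt_add_of_le_of_lt h3 hn
        _ = r := by ring
    have hyev : ∀ᶠ n in atTop, (S ∩ Metric.ball (z n) (ρ n)).Nonempty :=
      hev.mono fun n hn => key (z n) (ρ n) (hρpos n) hn
    set y : ℕ → EuclideanSpace ℝ (Fin 3) :=
      fun n => if h : (S ∩ Metric.ball (z n) (ρ n)).Nonempty then h.choose else x with hydef
    have hyS : ∀ n, (S ∩ Metric.ball (z n) (ρ n)).Nonempty → y n ∈ S ∩ Metric.ball (z n) (ρ n) := by
      intro n hn
      simp only [hydef, dif_pos hn]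
      exact hn.choose_spec
    refine mem_tangentConeAt_iff_exists_seq_norm_tendsto_atTop.mpr
      ⟨fun n => (n : ℝ) + 1, fun n => y n - x, ?_, ?_, ?_⟩
    swap
    · filter_upwards [hyev] with n hn
      have := hyS n hn
      simpa using this.1
    · have h1 : Tendsto (fun n : ℕ => (n : ℝ) + 1) atTop atTop :=
        tendsto_atTop_add_const_right _ 1 tendsto_natCast_atTop_atTop
      have h2 : (fun n : ℕ => ‖(n : ℝ) + 1‖) = fun n : ℕ => (n : ℝ) + 1 :=
        funext fun n => Real.norm_of_nonneg (by positivity)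
      rw [h2]; exact h1
    · rw [tendsto_iff_norm_sub_tendsto_zero]
      apply squeeze_zero' (Eventually.of_forall fun n => norm_nonneg _)
        (g := fun n : ℕ => ((n : ℝ) + 1)⁻¹) _ hinv
      filter_upwards [hyev] with n hn
      have hmem := hyS n hn
      have hne : ((n : ℝ) + 1) ≠ 0 := by positivity
      have heq : ((n : ℝ) + 1) • (y n - x) - v
          = ((n : ℝ) + 1) • (y n - z n) := by
        rw [hzdef]
        rw [smul_sub, smul_sub]
        have : ((n : ℝ) + 1) • (x + ((n : ℝ) + 1)⁻¹ • v)
            = ((n : ℝ) + 1) • x + v := by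
          rw [smul_add, smul_inv_smul₀ hne]
        rw [this]
        abel
      rw [heq, norm_smul, Real.norm_of_nonneg (by positivity : (0:ℝ) ≤ (n : ℝ) + 1)]
      have hd : ‖y n - z n‖ < ρ n := by
        rw [← dist_eq_norm]; exact hmem.2
      have hρle : ρ n ≤ ((n : ℝ) + 1)⁻¹ ^ 2 := min_le_left _ _
      calc ((n : ℝ) + 1) * ‖y n - z n‖ ≤ ((n : ℝ) + 1) * (((n : ℝ) + 1)⁻¹ ^ 2) := by
            apply mul_le_mul_of_nonneg_left (le_trans hd.le hρle) (by positivity)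
        _ = ((n : ℝ) + 1)⁻¹ := by rw [sq]; field_simp
  have hud : UniqueDiffWithinAt ℝ S x := by
    refine ⟨?_, hxc⟩
    have h : tangentConeAt ℝ S x = Set.univ := Set.eq_univ_of_forall htc
    rw [h, Submodule.span_univ, Submodule.top_coe]
    exact dense_univ
  by_cases hd : DifferentiableAt ℝ g x
  · have hne : (nhdsWithin x S).NeBot := mem_closure_iff_nhdsWithin_neBot.mp hxc
    have hgx : g x = 0 := by
      have h1 : Tendsto g (nhdsWithin x S) (nhds (g x)) := hd.continuousAt.continuousWithinAt
      have heq : (fun _ : EuclideanSpace ℝ (Fin 3) => (0 : F')) =ᶠ[nhdsWithin x S] g := by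
        filter_upwards [self_mem_nhdsWithin] with w hw
        exact (hw.1 : g w = 0).symm
      have h2 : Tendsto g (nhdsWithin x S) (nhds 0) := Tendsto.congr' heq tendsto_const_nhds
      exact tendsto_nhds_unique h1 h2
    have H1 : HasFDerivWithinAt g (fderiv ℝ g x) S x := hd.hasFDerivAt.hasFDerivWithinAt
    have H2 : HasFDerivWithinAt g (0 : EuclideanSpace ℝ (Fin 3) →L[ℝ] F') S x :=
      (hasFDerivWithinAt_const (0 : F') x S).congr (fun w hw => hw.1) hgx
    exact hud.eq H1 H2
  · exact fderiv_zero_of_not_differentiableAt hd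


lemma lap14_eq_zero_of_grad_ae_zero (f : EuclideanSpace ℝ (Fin 3) → ℝ)
    (U : Set (EuclideanSpace ℝ (Fin 3))) (hUm : MeasurableSet U) (hU : IsOpen U)
    (h : ∀ᵐ x ∂(volume.restrict U), gradient f x = 0) :
    ∀ x ∈ U, lap14 f x = 0 := by
  have hfd : ∀ᵐ x ∂(volume.restrict U), iteratedFDeriv ℝ 1 f x = 0 := by
    filter_upwards [h] with x hx
    have hfz : fderiv ℝ f x = 0 := by
      have : (InnerProductSpace.toDual ℝ (EuclideanSpace ℝ (Fin 3))).symm (fderiv ℝ f x) = 0 := hx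
      exact (LinearIsometryEquiv.map_eq_zero_iff _).mp this
    ext m
    rw [iteratedFDeriv_one_apply, hfz]
    simp
  have h0 : volume ({y | ¬ iteratedFDeriv ℝ 1 f y = 0} ∩ U) = 0 := by
    have := hfd
    rw [MeasureTheory.ae_iff] at this
    rwa [Measure.restrict_apply' hUm] at this
  have hkey := fderiv_eq_zero_of_ae_zero_on (iteratedFDeriv ℝ 1 f) U hU h0
  intro x hx
  unfold lap14
  apply Finset.sum_eq_zero
  intro i _
  have h2 : iteratedFDeriv ℝ 2 f x ![EuclideanSpace.single i 1, EuclideanSpace.single i 1]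
      = (fderiv ℝ (iteratedFDeriv ℝ 1 f) x)
          (![EuclideanSpace.single i 1, EuclideanSpace.single i 1] 0)
          (Fin.tail ![EuclideanSpace.single i 1, EuclideanSpace.single i 1]) :=
    iteratedFDeriv_succ_apply_left _
  rw [h2, hkey x hx]
  simp

/-- The energy is a strict Lyapunov function: if `E(φ(t),σ(t)) = E(φ₀,σ₀)`
for all `t ≥ 0`, then `∇μ = 0`, `∇N_σ = 0` and `p(φ)(N_σ - μ) = 0` a.e. in `Ω` for all `t`,
and consequently `φ_t ≡ 0`, `σ_t ≡ 0`, i.e. `(φ₀,σ₀)` is a stationary point. -/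
theorem stmt_14
    (Ω : Set (EuclideanSpace ℝ (Fin 3))) (hΩm : MeasurableSet Ω)
    (hΩop : IsOpen Ω) (hΩfin : volume Ω < ⊤)
    (χφ χσ : ℝ) (hχφ : 0 < χφ) (hχσ : 0 < χσ)
    (Ψ : ℝ → ℝ) (hΨ : ContDiff ℝ 2 Ψ)
    (p : ℝ → ℝ) (hpc : Continuous p) (hp0 : ∀ s : ℝ, 0 ≤ p s)
    (φ σ μ' Nσ φt σt : ℝ → EuclideanSpace ℝ (Fin 3) → ℝ)
    (hNσ : ∀ t x, Nσ t x = χσ * σ t x + χφ * (1 - φ t x))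
    (hdφ : ∀ t x, HasDerivAt (fun s => φ s x) (φt t x) t)
    (hdσ : ∀ t x, HasDerivAt (fun s => σ s x) (σt t x) t)
    (PDE1 : ∀ t, ∀ x ∈ Ω, φt t x = lap14 (μ' t) x + p (φ t x) * (Nσ t x - μ' t x))
    (PDE2 : ∀ t, ∀ x ∈ Ω, μ' t x = -lap14 (φ t) x + deriv Ψ (φ t x) - χφ * σ t x)
    (PDE3 : ∀ t, ∀ x ∈ Ω, σt t x = lap14 (Nσ t) x - p (φ t x) * (Nσ t x - μ' t x))
    (g1 : ∀ t, (∫ x in Ω, lap14 (μ' t) x * μ' t x) = -∫ x in Ω, ‖gradient (μ' t) x‖ ^ 2)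
    (g2 : ∀ t, (∫ x in Ω, lap14 (Nσ t) x * Nσ t x) = -∫ x in Ω, ‖gradient (Nσ t) x‖ ^ 2)
    (hE : ∀ t, HasDerivAt (En14 Ω χφ χσ Ψ φ σ)
      (∫ x in Ω, (φt t x * μ' t x + σt t x * Nσ t x)) t)
    (hi1 : ∀ t, Integrable (fun x => lap14 (μ' t) x * μ' t x) (volume.restrict Ω))
    (hi2 : ∀ t, Integrable (fun x => lap14 (Nσ t) x * Nσ t x) (volume.restrict Ω))
    (hi3 : ∀ t, Integrable (fun x => p (φ t x) * (Nσ t x - μ' t x) * μ' t x)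
      (volume.restrict Ω))
    (hi4 : ∀ t, Integrable (fun x => p (φ t x) * (Nσ t x - μ' t x) * Nσ t x)
      (volume.restrict Ω))
    (hi5 : ∀ t, Integrable (fun x => ‖gradient (μ' t) x‖ ^ 2) (volume.restrict Ω))
    (hi6 : ∀ t, Integrable (fun x => ‖gradient (Nσ t) x‖ ^ 2) (volume.restrict Ω))
    (hi7 : ∀ t, Integrable (fun x => p (φ t x) * (Nσ t x - μ' t x) ^ 2) (volume.restrict Ω))
    (hconst : ∀ t : ℝ, 0 ≤ t → En14 Ω χφ χσ Ψ φ σ t = En14 Ω χφ χσ Ψ φ σ 0) :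
    ∀ t : ℝ, 0 ≤ t →
      (∀ᵐ x ∂(volume.restrict Ω), gradient (μ' t) x = 0) ∧
      (∀ᵐ x ∂(volume.restrict Ω), gradient (Nσ t) x = 0) ∧
      (∀ᵐ x ∂(volume.restrict Ω), p (φ t x) * (Nσ t x - μ' t x) = 0) ∧
      (∀ᵐ x ∂(volume.restrict Ω), φt t x = 0) ∧
      (∀ᵐ x ∂(volume.restrict Ω), σt t x = 0) := by
  intro t ht
  -- Step 1: the derivative of the (constant) energy is zero
  have hD0 : (∫ x in Ω, (φt t x * μ' t x + σt t x * Nσ t x)) = 0 := by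
    have h1 : HasDerivWithinAt (En14 Ω χφ χσ Ψ φ σ)
        (∫ x in Ω, (φt t x * μ' t x + σt t x * Nσ t x)) (Set.Ici t) t :=
      (hE t).hasDerivWithinAt
    have h2 : HasDerivWithinAt (En14 Ω χφ χσ Ψ φ σ) 0 (Set.Ici t) t := by
      have hc : HasDerivWithinAt (fun _ : ℝ => En14 Ω χφ χσ Ψ φ σ 0) 0 (Set.Ici t) t :=
        hasDerivWithinAt_const t _ _
      exact hc.congr (fun y hy => hconst y (ht.trans hy)) (hconst t ht)
    exact (uniqueDiffOn_Ici t t Set.self_mem_Ici).eq_deriv _ h1 h2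
  -- Step 2: rewrite via the PDEs
  have e1 : (∫ x in Ω, (φt t x * μ' t x + σt t x * Nσ t x))
      = ∫ x in Ω, ((lap14 (μ' t) x * μ' t x + p (φ t x) * (Nσ t x - μ' t x) * μ' t x)
        + (lap14 (Nσ t) x * Nσ t x - p (φ t x) * (Nσ t x - μ' t x) * Nσ t x)) :=
    setIntegral_congr_fun hΩm fun x hx => by rw [PDE1 t x hx, PDE3 t x hx]; ring
  have e2 : (∫ x in Ω, ((lap14 (μ' t) x * μ' t x + p (φ t x) * (Nσ t x - μ' t x) * μ' t x)
        + (lap14 (Nσ t) x * Nσ t x - p (φ t x) * (Nσ t x - μ' t x) * Nσ t x)))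
      = ((∫ x in Ω, lap14 (μ' t) x * μ' t x)
          + (∫ x in Ω, p (φ t x) * (Nσ t x - μ' t x) * μ' t x))
        + ((∫ x in Ω, lap14 (Nσ t) x * Nσ t x)
          - (∫ x in Ω, p (φ t x) * (Nσ t x - μ' t x) * Nσ t x)) := by
    have iall : (∫ x in Ω, ((lap14 (μ' t) x * μ' t x + p (φ t x) * (Nσ t x - μ' t x) * μ' t x)
          + (lap14 (Nσ t) x * Nσ t x - p (φ t x) * (Nσ t x - μ' t x) * Nσ t x)))
        = (∫ x in Ω, (lap14 (μ' t) x * μ' t x + p (φ t x) * (Nσ t x - μ' t x) * μ' t x))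
          + (∫ x in Ω, (lap14 (Nσ t) x * Nσ t x - p (φ t x) * (Nσ t x - μ' t x) * Nσ t x)) :=
      integral_add ((hi1 t).add (hi3 t)) ((hi2 t).sub (hi4 t))
    have i13 : (∫ x in Ω, (lap14 (μ' t) x * μ' t x + p (φ t x) * (Nσ t x - μ' t x) * μ' t x))
        = (∫ x in Ω, lap14 (μ' t) x * μ' t x)
          + (∫ x in Ω, p (φ t x) * (Nσ t x - μ' t x) * μ' t x) :=
      integral_add (hi1 t) (hi3 t)
    have i24 : (∫ x in Ω, (lap14 (Nσ t) x * Nσ t x - p (φ t x) * (Nσ t x - μ' t x) * Nσ t x))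
        = (∫ x in Ω, lap14 (Nσ t) x * Nσ t x)
          - (∫ x in Ω, p (φ t x) * (Nσ t x - μ' t x) * Nσ t x) :=
      integral_sub (hi2 t) (hi4 t)
    rw [iall, i13, i24]
  have e4 : (∫ x in Ω, p (φ t x) * (Nσ t x - μ' t x) * μ' t x)
      - (∫ x in Ω, p (φ t x) * (Nσ t x - μ' t x) * Nσ t x)
      = - ∫ x in Ω, p (φ t x) * (Nσ t x - μ' t x) ^ 2 := by
    rw [← integral_sub (hi3 t) (hi4 t), ← integral_neg]
    exact integral_congr_ae (ae_of_all _ fun x => by ring)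
  set A := ∫ x in Ω, ‖gradient (μ' t) x‖ ^ 2 with hA
  set B := ∫ x in Ω, ‖gradient (Nσ t) x‖ ^ 2 with hB
  set C := ∫ x in Ω, p (φ t x) * (Nσ t x - μ' t x) ^ 2 with hC
  have hAnn : 0 ≤ A := integral_nonneg fun x => by positivity
  have hBnn : 0 ≤ B := integral_nonneg fun x => by positivity
  have hCnn : 0 ≤ C := integral_nonneg fun x => mul_nonneg (hp0 _) (sq_nonneg _)
  have hsum : A + B + C = 0 := by
    have hg1 := g1 t
    have hg2 := g2 t
    rw [e1, e2] at hD0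
    rw [← hA] at hg1
    rw [← hB] at hg2
    linarith [hD0, e4]
  have hA0 : A = 0 := by linarith
  have hB0 : B = 0 := by linarith
  have hC0 : C = 0 := by linarith
  -- Step 3: a.e. vanishing
  have hgradμ : ∀ᵐ x ∂(volume.restrict Ω), gradient (μ' t) x = 0 := by
    have := (integral_eq_zero_iff_of_nonneg_ae
      (ae_of_all _ fun x => by positivity) (hi5 t)).mp hA0
    filter_upwards [this] with x hx
    have : ‖gradient (μ' t) x‖ ^ 2 = 0 := hx
    have h1 : ‖gradient (μ' t) x‖ = 0 := by
      nlinarith [norm_nonneg (gradient (μ' t) x)]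
    exact norm_eq_zero.mp h1
  have hgradN : ∀ᵐ x ∂(volume.restrict Ω), gradient (Nσ t) x = 0 := by
    have := (integral_eq_zero_iff_of_nonneg_ae
      (ae_of_all _ fun x => by positivity) (hi6 t)).mp hB0
    filter_upwards [this] with x hx
    have : ‖gradient (Nσ t) x‖ ^ 2 = 0 := hx
    have h1 : ‖gradient (Nσ t) x‖ = 0 := by
      nlinarith [norm_nonneg (gradient (Nσ t) x)]
    exact norm_eq_zero.mp h1
  have hpd : ∀ᵐ x ∂(volume.restrict Ω), p (φ t x) * (Nσ t x - μ' t x) = 0 := by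
    have := (integral_eq_zero_iff_of_nonneg_ae
      (ae_of_all _ fun x => mul_nonneg (hp0 _) (sq_nonneg _)) (hi7 t)).mp hC0
    filter_upwards [this] with x hx
    have hx' : p (φ t x) * (Nσ t x - μ' t x) ^ 2 = 0 := hx
    rcases mul_eq_zero.mp hx' with h | h
    · rw [h, zero_mul]
    · rw [pow_eq_zero_iff (two_ne_zero)] at h
      rw [h, mul_zero]
  -- Step 4: the Laplacians vanish on Ω
  have hlapμ := lap14_eq_zero_of_grad_ae_zero (μ' t) Ω hΩm hΩop hgradμ
  have hlapN := lap14_eq_zero_of_grad_ae_zero (Nσ t) Ω hΩm hΩop hgradN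
  refine ⟨hgradμ, hgradN, hpd, ?_, ?_⟩
  · filter_upwards [hpd, ae_restrict_mem hΩm] with x h1 h2
    rw [PDE1 t x h2, hlapμ x h2, h1, add_zero]
  · filter_upwards [hpd, ae_restrict_mem hΩm] with x h1 h2
    rw [PDE3 t x h2, hlapN x h2, h1, sub_zero]


end
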